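/- Every CA-AG-3-band is a commutative semigroup; that is, if a magma S satisfies the left invertive law, cyclic associativity, and (a·a)·a = a and a·(a·a) = a for all a, then S is commutative (a·b = b·a for all a,b) and associative ((a·b)·c = a·(b·c) for all a,b,c). -/
import Mathlib

theorem CA_AG_3_band_is_commutative_semigroup {S : Type*} [Mul S]
    (li : ∀ a b c : S, (a * b) * c = (c * b) * a)
    (ca : ∀ a b c : S, a * (b * c) = c * (a * b))
    (band3l : ∀ a : S, (a * a) * a = a)
    (band3r : ∀ a : S, a * (a * a) = a) :
    (∀ a b : S, a * b = b * a) ∧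
    (∀ a b c : S, (a * b) * c = a * (b * c)) := by
  have comm : ∀ a b : S, a * b = b * a := by
    intro a b
    have h1 : a * b = (b * a) * (a * a) := by
      conv_lhs => rw [← band3l a]
      rw [li]
    have h2 : b * a = (b * a) * (a * a) := by
      conv_lhs => rw [← band3l a, ca, ca b a a, ca a a (b * a)]
    rw [h1, ← h2]
  refine ⟨comm, fun a b c => ?_⟩
  rw [li, comm, comm c b]
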